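/- Let 0 < a < b, let n ≥ 1 be an integer, and let f : [a,b] → ℝ be continuous. A polynomial p ∈ L_n minimizes ‖f − q‖_{C[a,b]} over q ∈ L_n if and only if there exist points a ≤ x₀ < x₁ < ⋯ < x_n ≤ b such that |p(x_j) − f(x_j)| = ‖p − f‖_{C[a,b]} for all j = 0,…,n and p(x_j) − f(x_j) = −(p(x_{j−1}) − f(x_{j−1})) for all j = 1,…,n (Chebyshev alternance characterization for odd polynomial approximation). -/

import Mathlib

/-- `oddPoly n α` is the odd polynomial `α 0 * x + α 1 * x^3 + ⋯ + α (n-1) * x^(2n-1)`.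
The functions of this form are exactly the elements of the space `L_n` of odd
polynomials of degree at most `2n-1`. -/
noncomputable def oddPoly (n : ℕ) (α : ℕ → ℝ) : ℝ → ℝ :=
  fun x => ∑ i ∈ Finset.range n, α i * x ^ (2 * i + 1)

/-- The uniform (Chebyshev) distance `‖f − g‖_{C[a,b]} = sup_{x ∈ [a,b]} |f x − g x|`. -/
noncomputable def unifErr (a b : ℝ) (f g : ℝ → ℝ) : ℝ :=
  sSup ((fun x => |f x - g x|) '' Set.Icc a b)

lemma oddPoly_cont (n : ℕ) (α : ℕ → ℝ) : Continuous (oddPoly n α) := by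
  unfold oddPoly
  exact continuous_finset_sum _ (fun i _ => by fun_prop)

lemma oddPoly_sub (n : ℕ) (α β : ℕ → ℝ) (x : ℝ) :
    oddPoly n (fun i => α i - β i) x = oddPoly n α x - oddPoly n β x := by
  simp [oddPoly, sub_mul, Finset.sum_sub_distrib]

lemma unifErr_isGreatest {a b : ℝ} (hab : a ≤ b) {f : ℝ → ℝ}
    (hf : ContinuousOn f (Set.Icc a b)) (g : ℝ → ℝ) (hg : Continuous g) :
    IsGreatest ((fun x => |f x - g x|) '' Set.Icc a b) (unifErr a b f g) := by
  have hc : IsCompact ((fun x => |f x - g x|) '' Set.Icc a b) :=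
    (isCompact_Icc).image_of_continuousOn ((hf.sub hg.continuousOn).abs)
  have hne : ((fun x => |f x - g x|) '' Set.Icc a b).Nonempty :=
    (Set.nonempty_Icc.2 hab).image _
  exact ⟨hc.sSup_mem hne, fun y hy => le_csSup hc.bddAbove hy⟩

lemma unifErr_le {a b : ℝ} (hab : a ≤ b) {f : ℝ → ℝ}
    (hf : ContinuousOn f (Set.Icc a b)) (g : ℝ → ℝ) (hg : Continuous g)
    {x : ℝ} (hx : x ∈ Set.Icc a b) : |f x - g x| ≤ unifErr a b f g :=
  (unifErr_isGreatest hab hf g hg).2 ⟨x, hx, rfl⟩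

lemma unifErr_nonneg {a b : ℝ} (hab : a ≤ b) {f : ℝ → ℝ}
    (hf : ContinuousOn f (Set.Icc a b)) (g : ℝ → ℝ) (hg : Continuous g) :
    0 ≤ unifErr a b f g :=
  le_trans (abs_nonneg _) (unifErr_le hab hf g hg (Set.left_mem_Icc.2 hab))

lemma unifErr_exists {a b : ℝ} (hab : a ≤ b) {f : ℝ → ℝ}
    (hf : ContinuousOn f (Set.Icc a b)) (g : ℝ → ℝ) (hg : Continuous g) :
    ∃ x ∈ Set.Icc a b, |f x - g x| = unifErr a b f g := by
  obtain ⟨x, hx, he⟩ := (unifErr_isGreatest hab hf g hg).1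
  exact ⟨x, hx, he⟩

open Polynomial in
lemma oddPoly_vanish (n : ℕ) (hn : 1 ≤ n) (γ : ℕ → ℝ) (y : Fin n → ℝ)
    (hpos : ∀ i, 0 < y i) (hinj : Function.Injective y)
    (hroot : ∀ i, oddPoly n γ (y i) = 0) (x : ℝ) : oddPoly n γ x = 0 := by
  set s : ℝ[X] := ∑ i ∈ Finset.range n, C (γ i) * X ^ i with hs
  have hdeg : s.natDegree < n := by
    have h1 : s.natDegree ≤ n - 1 := by
      apply Polynomial.natDegree_sum_le_of_forall_le
      intro i hi
      have := Polynomial.natDegree_C_mul_le (γ i) (X ^ i)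
      have h2 : (X ^ i : ℝ[X]).natDegree = i := Polynomial.natDegree_X_pow i
      have hi' : i ≤ n - 1 := by
        have := Finset.mem_range.1 hi
        omega
      omega
    omega
  have heval : ∀ t : ℝ, oddPoly n γ t = t * s.eval (t ^ 2) := by
    intro t
    simp only [hs, oddPoly, Polynomial.eval_finset_sum, Polynomial.eval_mul,
      Polynomial.eval_pow, Polynomial.eval_C, Polynomial.eval_X, Finset.mul_sum]
    exact Finset.sum_congr rfl (fun i _ => by ring)
  have hinj2 : Function.Injective (fun i : Fin n => y i ^ 2) := by
    intro i j h
    apply hinj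
    have h' : (y i - y j) * (y i + y j) = 0 := by ring_nf; simp only at h; nlinarith
    rcases mul_eq_zero.1 h' with h'' | h''
    · linarith
    · nlinarith [hpos i, hpos j]
  have hs0 : s = 0 := by
    apply Polynomial.eq_zero_of_natDegree_lt_card_of_eval_eq_zero' s
      (Finset.image (fun i : Fin n => y i ^ 2) Finset.univ)
    · intro t ht
      obtain ⟨i, _, rfl⟩ := Finset.mem_image.1 ht
      have := hroot i
      rw [heval] at this
      exact (mul_eq_zero.1 this).resolve_left (ne_of_gt (hpos i))
    · rw [Finset.card_image_of_injective _ hinj2]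
      simpa using hdeg
  rw [heval, hs0]
  simp

lemma alternance_implies_best (n : ℕ) (hn : 1 ≤ n) (a b : ℝ) (ha : 0 < a)
    (hab : a < b) (f : ℝ → ℝ) (hf : ContinuousOn f (Set.Icc a b)) (α : ℕ → ℝ)
    (x : Fin (n + 1) → ℝ) (hmono : StrictMono x) (hmem : ∀ j, x j ∈ Set.Icc a b)
    (hext : ∀ j, |oddPoly n α (x j) - f (x j)| = unifErr a b f (oddPoly n α))
    (halt : ∀ j : Fin n, oddPoly n α (x j.succ) - f (x j.succ)
      = -(oddPoly n α (x j.castSucc) - f (x j.castSucc)))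
    (β : ℕ → ℝ) : unifErr a b f (oddPoly n α) ≤ unifErr a b f (oddPoly n β) := by
  by_contra hcon
  push_neg at hcon
  have hab' : a ≤ b := le_of_lt hab
  set E := unifErr a b f (oddPoly n α) with hE_def
  have hE : 0 < E :=
    lt_of_le_of_lt (unifErr_nonneg hab' hf (oddPoly n β) (oddPoly_cont n β)) hcon
  set p := oddPoly n α with hp
  set q := oddPoly n β with hq
  set u : Fin (n + 1) → ℝ := fun j => p (x j) - f (x j) with hu_def
  have hu : ∀ j, |u j| = E := hext
  set r : ℕ → ℝ := fun i => α i - β i with hr_def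
  have hr : ∀ t, oddPoly n r t = p t - q t := fun t => oddPoly_sub n α β t
  have key : ∀ j, 0 < u j * (p (x j) - q (x j)) := by
    intro j
    have h1 : |f (x j) - q (x j)| ≤ unifErr a b f q :=
      unifErr_le hab' hf q (oddPoly_cont n β) (hmem j)
    have h2 : p (x j) - q (x j) = u j + (f (x j) - q (x j)) := by ring
    obtain ⟨h1a, h1b⟩ := abs_le.1 h1
    rcases (abs_eq hE.le).1 (hu j) with h | h
    · rw [h2, h]; apply mul_pos hE; linarith
    · rw [h2, h]; nlinarith
  have hsign : ∀ j : Fin n,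
      (p (x j.castSucc) - q (x j.castSucc)) * (p (x j.succ) - q (x j.succ)) < 0 := by
    intro j
    have k1 := key j.castSucc
    have k2 := key j.succ
    have ha' : u j.succ = -u j.castSucc := halt j
    rw [ha'] at k2
    by_contra hge
    push_neg at hge
    nlinarith [mul_pos k1 k2, sq_nonneg (u j.castSucc)]
  have hzero : ∀ j : Fin n, ∃ t, x j.castSucc < t ∧ t < x j.succ ∧ p t - q t = 0 := by
    intro j
    have hcs : x j.castSucc < x j.succ := hmono (Fin.castSucc_lt_succ : j.castSucc < j.succ)
    set g := fun t => p t - q t with hg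
    have hgc : Continuous g := (oddPoly_cont n α).sub (oddPoly_cont n β)
    rcases lt_or_ge (g (x j.castSucc)) 0 with hneg | hpos
    · have hgs : 0 < g (x j.succ) := by
        rcases lt_or_ge 0 (g (x j.succ)) with h | h
        · exact h
        · exfalso
          have hs : g (x j.castSucc) * g (x j.succ) < 0 := hsign j
          nlinarith [mul_nonneg (neg_nonneg.2 hneg.le) (neg_nonneg.2 h)]
      have h0 : (0 : ℝ) ∈ Set.Ioo (g (x j.castSucc)) (g (x j.succ)) := ⟨hneg, hgs⟩
      obtain ⟨t, ht, h0'⟩ := intermediate_value_Ioo hcs.le hgc.continuousOn h0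
      exact ⟨t, ht.1, ht.2, h0'⟩
    · have hneg' : g (x j.succ) < 0 := by
        rcases lt_or_ge (g (x j.succ)) 0 with h | h
        · exact h
        · exfalso
          have hs : g (x j.castSucc) * g (x j.succ) < 0 := hsign j
          nlinarith [mul_nonneg hpos h]
      have h0 : (0 : ℝ) ∈ Set.Ioo (g (x j.succ)) (g (x j.castSucc)) := by
        constructor
        · exact hneg'
        · rcases lt_or_eq_of_le hpos with h | h
          · exact h
          · exfalso
            have hs : g (x j.castSucc) * g (x j.succ) < 0 := hsign j
            rw [← h] at hs; simp at hs
      obtain ⟨t, ht, h0'⟩ := intermediate_value_Ioo' hcs.le hgc.continuousOn h0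
      exact ⟨t, ht.1, ht.2, h0'⟩
  choose y hy1 hy2 hy3 using hzero
  have hymono : StrictMono y := by
    intro j k hjk
    have h1 : x j.succ ≤ x k.castSucc := hmono.monotone (by
      rw [Fin.succ_le_castSucc_iff]; exact hjk)
    calc y j < x j.succ := hy2 j
      _ ≤ x k.castSucc := h1
      _ < y k := hy1 k
  have hypos : ∀ j, 0 < y j := fun j =>
    lt_trans (lt_of_lt_of_le ha (hmem j.castSucc).1) (hy1 j)
  have hall : ∀ t, oddPoly n r t = 0 :=
    oddPoly_vanish n hn r y hypos hymono.injective
      (fun j => by rw [hr]; exact hy3 j)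
  have h0 : p (x 0) - q (x 0) = 0 := by rw [← hr]; exact hall _
  have := key 0
  rw [h0] at this
  simp at this

open Polynomial in
lemma exists_oddPoly_rep (n m : ℕ) (hm : m < n) (c0 : ℝ) (z : ℕ → ℝ) :
    ∃ γ : ℕ → ℝ, ∀ y : ℝ,
      oddPoly n γ y = c0 * y * ∏ i ∈ Finset.range m, (z i ^ 2 - y ^ 2) := by
  set Q : ℝ[X] := C c0 * ∏ i ∈ Finset.range m, (C (z i ^ 2) - X) with hQ
  have hdeg : Q.natDegree < n := by
    rw [hQ]
    have h1 := Polynomial.natDegree_mul_le (p := C c0)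
      (q := ∏ i ∈ Finset.range m, (C (z i ^ 2) - X))
    have h2 := Polynomial.natDegree_prod_le (Finset.range m)
      (fun i => (C (z i ^ 2) - X : ℝ[X]))
    have h3 : ∀ i ∈ Finset.range m, ((C (z i ^ 2) - X : ℝ[X])).natDegree ≤ 1 := by
      intro i _
      refine le_trans (Polynomial.natDegree_sub_le _ _) ?_
      simp [Polynomial.natDegree_X]
    have h4 : ∑ i ∈ Finset.range m, ((C (z i ^ 2) - X : ℝ[X])).natDegree ≤ m := by
      calc ∑ i ∈ Finset.range m, ((C (z i ^ 2) - X : ℝ[X])).natDegree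
          ≤ ∑ _i ∈ Finset.range m, 1 := Finset.sum_le_sum h3
        _ = m := by simp
    have h5 : (C c0 : ℝ[X]).natDegree = 0 := Polynomial.natDegree_C c0
    omega
  refine ⟨fun i => Q.coeff i, fun y => ?_⟩
  have h1 : oddPoly n (fun i => Q.coeff i) y = y * Q.eval (y ^ 2) := by
    rw [Polynomial.eval_eq_sum_range' hdeg]
    rw [oddPoly, Finset.mul_sum]
    exact Finset.sum_congr rfl (fun i _ => by ring)
  rw [h1]
  simp only [hQ, Polynomial.eval_mul, Polynomial.eval_C, Polynomial.eval_prod,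
    Polynomial.eval_sub, Polynomial.eval_X]
  ring

lemma oddPoly_sub_smul (n : ℕ) (α γ : ℕ → ℝ) (ε : ℝ) (y : ℝ) :
    oddPoly n (fun i => α i - ε * γ i) y = oddPoly n α y - ε * oddPoly n γ y := by
  simp only [oddPoly, Finset.mul_sum, ← Finset.sum_sub_distrib]
  exact Finset.sum_congr rfl (fun i _ => by ring)

set_option maxHeartbeats 2000000 in
lemma best_implies_alternance (n : ℕ) (hn : 1 ≤ n) (a b : ℝ) (ha : 0 < a)
    (hab : a < b) (f : ℝ → ℝ) (hf : ContinuousOn f (Set.Icc a b)) (α : ℕ → ℝ)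
    (hbest : ∀ β : ℕ → ℝ, unifErr a b f (oddPoly n α) ≤ unifErr a b f (oddPoly n β)) :
    ∃ x : Fin (n + 1) → ℝ, StrictMono x ∧ (∀ j, x j ∈ Set.Icc a b) ∧
      (∀ j, |oddPoly n α (x j) - f (x j)| = unifErr a b f (oddPoly n α)) ∧
      (∀ j : Fin n, oddPoly n α (x j.succ) - f (x j.succ)
        = -(oddPoly n α (x j.castSucc) - f (x j.castSucc))) := by
  classical
  have hab' : a ≤ b := hab.le
  set p : ℝ → ℝ := oddPoly n α with hp
  set e : ℝ → ℝ := fun t => p t - f t with he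
  set E := unifErr a b f p with hEdef
  have hpc : Continuous p := oddPoly_cont n α
  have hec : ContinuousOn e (Set.Icc a b) := hpc.continuousOn.sub hf
  have hle : ∀ t ∈ Set.Icc a b, |e t| ≤ E := by
    intro t ht
    have h1 := unifErr_le hab' hf p hpc ht
    calc |e t| = |f t - p t| := by rw [he]; exact abs_sub_comm _ _
      _ ≤ E := h1
  have hEnn : 0 ≤ E := unifErr_nonneg hab' hf p hpc
  have hn' : (0:ℝ) < n := by exact_mod_cast hn
  rcases eq_or_lt_of_le hEnn with hE0 | hE
  · -- E = 0 : error vanishes identically, pick equally spaced points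
    have hez : ∀ t ∈ Set.Icc a b, e t = 0 := by
      intro t ht
      have := hle t ht
      rw [← hE0] at this
      have := abs_nonneg (e t)
      have : |e t| = 0 := by linarith [hle t ht, (hE0 ▸ hle t ht : |e t| ≤ 0)]
      exact abs_eq_zero.1 this
    have hstep : (0:ℝ) < (b - a) / n := div_pos (by linarith) hn'
    refine ⟨fun j => a + (j : ℝ) * ((b - a) / n), ?_, ?_, ?_, ?_⟩
    · intro j k hjk
      have hjk' : (j : ℝ) < (k : ℝ) := by exact_mod_cast hjk
      have := mul_lt_mul_of_pos_right hjk' hstep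
      linarith
    · intro j
      have hj0 : (0:ℝ) ≤ (j : ℝ) := Nat.cast_nonneg _
      have hjn : (j : ℝ) ≤ (n : ℝ) := by
        have := j.isLt
        exact_mod_cast Nat.lt_succ_iff.mp this
      constructor
      · nlinarith
      · have h1 : (j : ℝ) * ((b - a) / n) ≤ (n : ℝ) * ((b - a) / n) :=
          mul_le_mul_of_nonneg_right hjn hstep.le
        have h2 : (n : ℝ) * ((b - a) / n) = b - a := by field_simp
        linarith
    · intro j
      have hmem : a + (j : ℝ) * ((b - a) / n) ∈ Set.Icc a b := by
        have hj0 : (0:ℝ) ≤ (j : ℝ) := Nat.cast_nonneg _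
        have hjn : (j : ℝ) ≤ (n : ℝ) := by
          exact_mod_cast Nat.lt_succ_iff.mp j.isLt
        constructor
        · nlinarith
        · have h1 : (j : ℝ) * ((b - a) / n) ≤ (n : ℝ) * ((b - a) / n) :=
            mul_le_mul_of_nonneg_right hjn hstep.le
          have h2 : (n : ℝ) * ((b - a) / n) = b - a := by field_simp
          linarith
      have := hez _ hmem
      rw [he] at this
      simp only at this
      rw [show oddPoly n α (a + (j : ℝ) * ((b - a) / n)) - f (a + (j : ℝ) * ((b - a) / n))
        = (0:ℝ) from this, ← hE0]
      simp
    · intro j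
      have hm1 : a + ((j.succ : Fin (n+1)) : ℝ) * ((b - a) / n) ∈ Set.Icc a b := by
        have hj0 : (0:ℝ) ≤ ((j.succ : Fin (n+1)) : ℝ) := Nat.cast_nonneg _
        have hjn : ((j.succ : Fin (n+1)) : ℝ) ≤ (n : ℝ) := by
          exact_mod_cast Nat.lt_succ_iff.mp (j.succ).isLt
        constructor
        · nlinarith
        · have h1 : ((j.succ : Fin (n+1)) : ℝ) * ((b - a) / n) ≤ (n : ℝ) * ((b - a) / n) :=
            mul_le_mul_of_nonneg_right hjn hstep.le
          have h2 : (n : ℝ) * ((b - a) / n) = b - a := by field_simp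
          linarith
      have hm2 : a + ((j.castSucc : Fin (n+1)) : ℝ) * ((b - a) / n) ∈ Set.Icc a b := by
        have hj0 : (0:ℝ) ≤ ((j.castSucc : Fin (n+1)) : ℝ) := Nat.cast_nonneg _
        have hjn : ((j.castSucc : Fin (n+1)) : ℝ) ≤ (n : ℝ) := by
          exact_mod_cast Nat.lt_succ_iff.mp (j.castSucc).isLt
        constructor
        · nlinarith
        · have h1 : ((j.castSucc : Fin (n+1)) : ℝ) * ((b - a) / n) ≤ (n : ℝ) * ((b - a) / n) :=
            mul_le_mul_of_nonneg_right hjn hstep.le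
          have h2 : (n : ℝ) * ((b - a) / n) = b - a := by field_simp
          linarith
      have h1 := hez _ hm1
      have h2 := hez _ hm2
      rw [he] at h1 h2
      simp only at h1 h2
      rw [h1, h2]
      ring
  · -- 0 < E
    set A : Set ℝ := Set.Icc a b ∩ (fun t => |e t|) ⁻¹' {E} with hA
    have hA_closed : IsClosed A :=
      ContinuousOn.preimage_isClosed_of_isClosed hec.abs isClosed_Icc isClosed_singleton
    have hA_sub : A ⊆ Set.Icc a b := Set.inter_subset_left
    have hA_ne : A.Nonempty := by
      obtain ⟨t, ht, h⟩ := unifErr_exists hab' hf p hpc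
      refine ⟨t, ht, ?_⟩
      have : |e t| = |f t - p t| := by rw [he]; exact abs_sub_comm _ _
      simp only [Set.mem_preimage, Set.mem_singleton_iff]
      rw [this, h]
    have hA_bdd : BddBelow A := ⟨a, fun t ht => (hA_sub ht).1⟩
    have hA_abs : ∀ t ∈ A, |e t| = E := fun t ht => ht.2
    have hA_ne0 : ∀ t ∈ A, e t ≠ 0 := by
      intro t ht h0
      have := hA_abs t ht
      rw [h0] at this
      simp at this
      linarith
    set B : ℝ → Set ℝ := fun v => {t | t ∈ A ∧ v < t ∧ e t = - e v} with hB
    set X : ℕ → ℝ := fun k => Nat.rec (sInf A) (fun _ xk => sInf (B xk)) k with hX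
    have hXs : ∀ k, X (k+1) = sInf (B (X k)) := fun k => rfl
    have hX0A : X 0 ∈ A := hA_closed.csInf_mem hA_ne hA_bdd
    have hX0min : ∀ t ∈ A, X 0 ≤ t := fun t ht => csInf_le hA_bdd ht
    have hstep : ∀ v ∈ A, (B v).Nonempty →
        sInf (B v) ∈ A ∧ v < sInf (B v) ∧ e (sInf (B v)) = - e v ∧
          ∀ t ∈ B v, sInf (B v) ≤ t := by
      intro v hv hne
      have hBsub : B v ⊆ Set.Icc a b := fun t ht => hA_sub ht.1
      have hbdd : BddBelow (B v) := ⟨a, fun t ht => (hBsub ht).1⟩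
      have hlb : ∀ t ∈ B v, sInf (B v) ≤ t := fun t ht => csInf_le hbdd ht
      have hcl : sInf (B v) ∈ closure (B v) := csInf_mem_closure hne hbdd
      have hiA : sInf (B v) ∈ A := closure_minimal (fun t ht => ht.1) hA_closed hcl
      have hie : e (sInf (B v)) = - e v := by
        have hcw : ContinuousWithinAt e (B v) (sInf (B v)) :=
          (hec (sInf (B v)) (hA_sub hiA)).mono hBsub
        have h1 := hcw.mem_closure_image hcl
        have h2 : closure (e '' B v) ⊆ {- e v} :=
          closure_minimal (by rintro y ⟨t, ht, rfl⟩; exact ht.2.2) isClosed_singleton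
        exact h2 h1
      have hvle : v ≤ sInf (B v) :=
        closure_minimal (fun t ht => le_of_lt ht.2.1) isClosed_Ici hcl
      have hvlt : v < sInf (B v) := by
        rcases eq_or_lt_of_le hvle with h | h
        · exfalso
          apply hA_ne0 v hv
          rw [← h] at hie
          linarith
        · exact h
      exact ⟨hiA, hvlt, hie, hlb⟩
    have inv1 : ∀ M, (∀ k < M, (B (X k)).Nonempty) → ∀ k ≤ M, X k ∈ A := by
      intro M hM k
      induction k with
      | zero => intro _; exact hX0A
      | succ k ih =>
        intro hk
        have h1 := ih (by omega)
        have h2 := hM k (by omega)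
        rw [hXs]
        exact (hstep _ h1 h2).1
    have inv2 : ∀ M, (∀ k < M, (B (X k)).Nonempty) →
        ∀ k < M, X k < X (k+1) ∧ e (X (k+1)) = - e (X k) := by
      intro M hM k hk
      have h1 := inv1 M hM k hk.le
      have h2 := hM k hk
      have h3 := hstep _ h1 h2
      rw [hXs]
      exact ⟨h3.2.1, h3.2.2.1⟩
    by_cases hal : ∀ k < n, (B (X k)).Nonempty
    · refine ⟨fun j => X j, ?_, ?_, ?_, ?_⟩
      · rw [Fin.strictMono_iff_lt_succ]
        intro i
        have := (inv2 n hal i i.isLt).1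
        simpa using this
      · intro j
        exact hA_sub (inv1 n hal j (by omega))
      · intro j
        have h1 : |e (X (j : ℕ))| = E := (inv1 n hal j (by omega)).2
        rw [he] at h1
        simpa using h1
      · intro j
        have h1 := (inv2 n hal j j.isLt).2
        rw [he] at h1
        simp only at h1
        simpa using h1
    · push_neg at hal
      obtain ⟨k0, hk0n, hk0⟩ := hal
      have hk0' : ¬(B (X k0)).Nonempty := by rw [hk0]; simp
      have hex : ∃ k, ¬(B (X k)).Nonempty := ⟨k0, hk0'⟩
      set m := Nat.find hex with hm
      have hmP : ¬(B (X m)).Nonempty := Nat.find_spec hex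
      have hmlt : m < n := lt_of_le_of_lt (Nat.find_min' hex hk0') hk0n
      have halm : ∀ k < m, (B (X k)).Nonempty := fun k hk => not_not.1 (Nat.find_min hex hk)
      have hmemA : ∀ k ≤ m, X k ∈ A := inv1 m halm
      have hcons := inv2 m halm
      have hBm : ∀ t ∈ A, X m < t → e t ≠ - e (X m) := by
        intro t ht h1 h2
        exact hmP ⟨t, ht, h1, h2⟩
      have hsE : ∀ k ≤ m, e (X k) = E ∨ e (X k) = -E := fun k hk =>
        (abs_eq hE.le).1 ((hmemA k hk).2)
      have hXmono : ∀ j k, j ≤ k → k ≤ m → X j ≤ X k := by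
        have key : ∀ d j, j + d ≤ m → X j ≤ X (j + d) := by
          intro d
          induction d with
          | zero => intro j _; simp
          | succ d ih =>
            intro j h
            calc X j ≤ X (j + d) := ih j (by omega)
              _ ≤ X (j + d + 1) := (hcons (j + d) (by omega)).1.le
        intro j k hjk hkm
        have := key (k - j) j (by omega)
        rwa [show j + (k - j) = k by omega] at this
      have hgapk : ∀ k < m, ∀ t ∈ A, X k < t → t < X (k+1) → e t = e (X k) := by
        intro k hk t ht h1 h2
        have hnB : t ∉ B (X k) := by
          intro htB
          have h3 := (hstep _ (hmemA k hk.le) (halm k hk)).2.2.2 t htB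
          rw [← hXs k] at h3
          exact absurd h3 (not_le.2 h2)
        have hne : e t ≠ - e (X k) := fun hc => hnB ⟨ht, h1, hc⟩
        have htE : e t = E ∨ e t = -E := (abs_eq hE.le).1 (hA_abs t ht)
        rcases hsE k hk.le with h | h <;> rcases htE with h' | h' <;>
          first
            | linarith
            | exact absurd (by linarith : e t = - e (X k)) hne
      have hgapm : ∀ t ∈ A, X m < t → e t = e (X m) := by
        intro t ht h1
        have hne : e t ≠ - e (X m) := hBm t ht h1
        have htE : e t = E ∨ e t = -E := (abs_eq hE.le).1 (hA_abs t ht)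
        rcases hsE m le_rfl with h | h <;> rcases htE with h' | h' <;>
          first
            | linarith
            | exact absurd (by linarith : e t = - e (X m)) hne
      set W : ℕ → Set ℝ := fun j => A ∩ Set.Ico (X j) (X (j+1)) with hW
      set w : ℕ → ℝ := fun j => sSup (W j) with hw
      have hwfacts : ∀ j < m, w j ∈ A ∧ e (w j) = e (X j) ∧ X j ≤ w j ∧ w j < X (j+1) ∧
          ∀ t ∈ A, w j < t → t < X (j+1) → False := by
        intro j hj
        have hXj : X j ∈ A := hmemA j hj.le
        have hXjlt : X j < X (j+1) := (hcons j hj).1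
        have hne : (W j).Nonempty := ⟨X j, hXj, le_refl _, hXjlt⟩
        have hbddW : BddAbove (W j) := ⟨b, fun t ht => (hA_sub ht.1).2⟩
        have hub : ∀ t ∈ W j, t ≤ w j := fun t ht => le_csSup hbddW ht
        have hclW : w j ∈ closure (W j) := csSup_mem_closure hne hbddW
        have hwA : w j ∈ A := closure_minimal (fun t ht => ht.1) hA_closed hclW
        have hsign : ∀ t ∈ W j, e t = e (X j) := by
          intro t ht
          rcases eq_or_lt_of_le ht.2.1 with h | h
          · rw [← h]
          · exact hgapk j hj t ht.1 h ht.2.2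
        have hew : e (w j) = e (X j) := by
          have hcw : ContinuousWithinAt e (W j) (w j) :=
            (hec _ (hA_sub hwA)).mono (fun t ht => hA_sub ht.1)
          have h1 := hcw.mem_closure_image hclW
          have h2 : closure (e '' W j) ⊆ {e (X j)} :=
            closure_minimal (by rintro y ⟨t, ht, rfl⟩; exact hsign t ht) isClosed_singleton
          exact h2 h1
        have hwge : X j ≤ w j := hub _ ⟨hXj, le_refl _, hXjlt⟩
        have hwle : w j ≤ X (j+1) :=
          closure_minimal (fun t ht => le_of_lt ht.2.2) isClosed_Iic hclW
        have hwlt : w j < X (j+1) := by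
          rcases eq_or_lt_of_le hwle with h | h
          · exfalso
            have h1 := (hcons j hj).2
            rw [← h, hew] at h1
            exact hA_ne0 (X j) hXj (by linarith)
          · exact h
        refine ⟨hwA, hew, hwge, hwlt, ?_⟩
        intro t ht h1 h2
        have htW : t ∈ W j := ⟨ht, le_trans hwge h1.le, h2⟩
        exact absurd (hub t htW) (not_le.2 h1)
      have hzex : ∀ j, ∃ t, j < m → w j < t ∧ t < X (j+1) ∧ e t = 0 := by
        intro j
        by_cases hj : j < m
        · obtain ⟨hwA, hew, hwge, hwlt, _⟩ := hwfacts j hj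
          have hIcc_sub : Set.Icc (w j) (X (j+1)) ⊆ Set.Icc a b :=
            Set.Icc_subset_Icc (hA_sub hwA).1 (hA_sub (hmemA (j+1) hj)).2
          have hecc : ContinuousOn e (Set.Icc (w j) (X (j+1))) := hec.mono hIcc_sub
          have hXj1 : e (X (j+1)) = - e (X j) := (hcons j hj).2
          rcases hsE j hj.le with h | h
          · have h0 : (0:ℝ) ∈ Set.Ioo (e (X (j+1))) (e (w j)) := by
              rw [hXj1, hew, h]
              exact ⟨by linarith, by linarith⟩
            obtain ⟨t, ht, h0'⟩ := intermediate_value_Ioo' hwlt.le hecc h0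
            exact ⟨t, fun _ => ⟨ht.1, ht.2, h0'⟩⟩
          · have h0 : (0:ℝ) ∈ Set.Ioo (e (w j)) (e (X (j+1))) := by
              rw [hXj1, hew, h]
              exact ⟨by linarith, by linarith⟩
            obtain ⟨t, ht, h0'⟩ := intermediate_value_Ioo hwlt.le hecc h0
            exact ⟨t, fun _ => ⟨ht.1, ht.2, h0'⟩⟩
        · exact ⟨0, fun h => absurd h hj⟩
      choose z hz using hzex
      have hzb : ∀ i < m, a < z i ∧ z i < b ∧ e (z i) = 0 := by
        intro i hi
        obtain ⟨h1, h2, h3⟩ := hz i hi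
        obtain ⟨hwA, _, hwge, _, _⟩ := hwfacts i hi
        refine ⟨lt_of_le_of_lt (hA_sub hwA).1 h1, ?_, h3⟩
        exact lt_of_lt_of_le h2 (hA_sub (hmemA (i+1) hi)).2
      have hzmono : ∀ i k, i < k → k < m → z i < z k := by
        intro i k hik hk
        obtain ⟨_, h2, _⟩ := hz i (lt_trans hik hk)
        obtain ⟨h1', _, _⟩ := hz k hk
        obtain ⟨_, _, hwge, _, _⟩ := hwfacts k hk
        calc z i < X (i+1) := h2
          _ ≤ X k := hXmono (i+1) k (by omega) hk.le
          _ ≤ w k := hwge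
          _ < z k := h1'
      have hzle : ∀ i k, i ≤ k → k < m → z i ≤ z k := by
        intro i k hik hk
        rcases eq_or_lt_of_le hik with rfl | h
        · exact le_rfl
        · exact (hzmono i k h hk).le
      set c : ℕ → ℝ := fun j => if j = 0 then a else if j - 1 < m then z (j-1) else b with hc
      have hc0 : c 0 = a := by simp [hc]
      have hcval1 : ∀ j, 1 ≤ j → j ≤ m → c j = z (j-1) := by
        intro j h1 h2
        simp only [hc]
        rw [if_neg (by omega), if_pos (by omega)]
      have hcsucc : ∀ j < m, c (j+1) = z j := by
        intro j hj
        rw [hcval1 (j+1) (by omega) (by omega)]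
        simp
      have hctop : c (m+1) = b := by
        simp only [hc]
        rw [if_neg (by omega), if_neg (by omega)]
      have hclow : ∀ j ≤ m, a ≤ c j := by
        intro j hj
        rcases Nat.eq_zero_or_pos j with rfl | h1
        · rw [hc0]
        · rw [hcval1 j h1 hj]
          exact (hzb (j-1) (by omega)).1.le
      have hchigh : ∀ j ≤ m, c (j+1) ≤ b := by
        intro j hj
        rcases eq_or_lt_of_le hj with rfl | h1
        · rw [hctop]
        · rw [hcsucc j h1]
          exact (hzb j h1).2.1.le
      have hcle : ∀ j ≤ m, c j ≤ c (j+1) := by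
        intro j hj
        rcases Nat.eq_zero_or_pos j with rfl | h1
        · rw [hc0]
          rcases Nat.eq_zero_or_pos m with hm0 | hm1
          · rw [show (0:ℕ)+1 = m+1 by omega, hctop]
            exact hab'
          · rw [hcsucc 0 hm1]
            exact (hzb 0 hm1).1.le
        · rcases eq_or_lt_of_le hj with heq | h2
          · have h1m : 1 ≤ m := heq ▸ h1
            rw [heq, show m+1 = m+1 from rfl, hctop, hcval1 m h1m le_rfl]
            exact (hzb (m-1) (by omega)).2.1.le
          · rw [hcsucc j h2, hcval1 j h1 hj]
            exact hzle (j-1) j (by omega) h2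
      have hcover : ∀ y ∈ Set.Icc a b, ∃ j ≤ m, c j ≤ y ∧ y ≤ c (j+1) := by
        intro y hy
        set T := (Finset.range (m+1)).filter (fun j => c j ≤ y) with hT
        have hTne : T.Nonempty := by
          refine ⟨0, ?_⟩
          rw [hT, Finset.mem_filter]
          exact ⟨by simp, by rw [hc0]; exact hy.1⟩
        have hjT : T.max' hTne ∈ T := T.max'_mem hTne
        obtain ⟨hjr, hcj⟩ := Finset.mem_filter.1 hjT
        have hjm : T.max' hTne ≤ m := by
          rw [Finset.mem_range] at hjr
          omega
        refine ⟨T.max' hTne, hjm, hcj, ?_⟩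
        rcases eq_or_lt_of_le hjm with heq | hjm'
        · rw [heq, hctop]
          exact hy.2
        · by_contra hlt
          push_neg at hlt
          have hjT' : T.max' hTne + 1 ∈ T :=
            Finset.mem_filter.2 ⟨Finset.mem_range.2 (by omega), hlt.le⟩
          have := T.le_max' _ hjT'
          omega
      have hF1 : ∀ j ≤ m, ∀ y, c j ≤ y → y ≤ c (j+1) → y ∈ A → e y = e (X j) := by
        intro j hj y h1 h2 hyA
        rcases lt_trichotomy y (X j) with hlt | heq | hgt
        · exfalso
          rcases Nat.eq_zero_or_pos j with rfl | hj1
          · exact absurd (hX0min y hyA) (not_le.2 hlt)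
          · have hi : j - 1 < m := by omega
            obtain ⟨_, _, _, _, hgapw⟩ := hwfacts (j-1) hi
            apply hgapw y hyA
            · have hcz : c j = z (j-1) := hcval1 j hj1 hj
              have := (hz (j-1) hi).1
              linarith
            · rw [show j - 1 + 1 = j by omega]
              exact hlt
        · rw [heq]
        · rcases eq_or_lt_of_le hj with rfl | hjm
          · exact hgapm y hyA hgt
          · apply hgapk j hjm y hyA hgt
            have := (hz j hjm).2.1
            have hcz := hcsucc j hjm
            linarith
      -- pointwise strict bound, then compactness: uniform gap δ
      obtain ⟨δ, hδ0, hδ⟩ : ∃ δ > 0, ∀ j ≤ m, ∀ y, c j ≤ y → y ≤ c (j+1) →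
          -E^2 + δ ≤ e (X j) * e y := by
        have hptwise : ∀ j ≤ m, ∀ y, c j ≤ y → y ≤ c (j+1) → -E^2 < e (X j) * e y := by
          intro j hj y h1 h2
          have hyIcc : y ∈ Set.Icc a b :=
            ⟨le_trans (hclow j hj) h1, le_trans h2 (hchigh j hj)⟩
          have hb1 : |e y| ≤ E := hle y hyIcc
          have hb2 : |e (X j)| = E := (hmemA j hj).2
          rcases eq_or_lt_of_le hb1 with heq | hlt
          · have hyA : y ∈ A := ⟨hyIcc, by
              simp only [Set.mem_preimage, Set.mem_singleton_iff]; exact heq⟩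
            have h4 := hF1 j hj y h1 h2 hyA
            rw [h4]
            have h3 : e (X j) * e (X j) = E^2 := by
              rcases hsE j hj with h | h <;> rw [h] <;> ring
            rw [h3]
            nlinarith
          · have h3 : |e (X j) * e y| < E^2 := by
              rw [abs_mul, hb2]
              nlinarith [abs_nonneg (e y)]
            have := neg_abs_le (e (X j) * e y)
            linarith [abs_lt.1 h3]
        have hmin : ∀ j, ∃ d, 0 < d ∧ (j ≤ m → ∀ y, c j ≤ y → y ≤ c (j+1) →
            -E^2 + d ≤ e (X j) * e y) := by
          intro j
          by_cases hj : j ≤ m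
          · have hne : (Set.Icc (c j) (c (j+1))).Nonempty := Set.nonempty_Icc.2 (hcle j hj)
            have hsub : Set.Icc (c j) (c (j+1)) ⊆ Set.Icc a b :=
              Set.Icc_subset_Icc (hclow j hj) (hchigh j hj)
            have hcont : ContinuousOn (fun y => e (X j) * e y) (Set.Icc (c j) (c (j+1))) :=
              continuousOn_const.mul (hec.mono hsub)
            obtain ⟨y0, hy0, hmin0⟩ := isCompact_Icc.exists_isMinOn hne hcont
            refine ⟨e (X j) * e y0 + E^2, ?_, ?_⟩
            · have := hptwise j hj y0 hy0.1 hy0.2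
              linarith
            · intro _ y h1 h2
              rw [isMinOn_iff] at hmin0
              have := hmin0 y (Set.mem_Icc.2 ⟨h1, h2⟩)
              linarith
          · exact ⟨1, one_pos, fun h => absurd h hj⟩
        choose D hD using hmin
        refine ⟨(Finset.range (m+1)).inf' ⟨0, by simp⟩ D, ?_, ?_⟩
        · show (0:ℝ) < _
          exact (Finset.lt_inf'_iff _).2 (fun j _ => (hD j).1)
        · intro j hj y h1 h2
          have h3 : (Finset.range (m+1)).inf' ⟨0, by simp⟩ D ≤ D j :=
            Finset.inf'_le _ (Finset.mem_range.2 (by omega))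
          have := (hD j).2 hj y h1 h2
          linarith
      -- the perturbation polynomial r
      obtain ⟨γr, hγr⟩ := exists_oddPoly_rep n m hmlt (e (X 0)) z
      set r : ℝ → ℝ := oddPoly n γr with hr
      have hrc : Continuous r := oddPoly_cont n γr
      obtain ⟨CR, hCR0, hCRb⟩ : ∃ CR, 0 ≤ CR ∧ ∀ y ∈ Set.Icc a b, |r y| ≤ CR := by
        obtain ⟨y0, hy0, hmax⟩ := isCompact_Icc.exists_isMaxOn
          (Set.nonempty_Icc.2 hab') (hrc.abs.continuousOn)
        exact ⟨|r y0|, abs_nonneg _, fun y hy => hmax hy⟩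
      have hpow : ∀ j ≤ m, e (X j) = (-1:ℝ)^j * e (X 0) := by
        intro j hj
        induction j with
        | zero => simp
        | succ j ih =>
          have h1 := (hcons j (by omega)).2
          rw [h1, ih (by omega)]
          ring
      have hE0sq : e (X 0) ^ 2 = E ^ 2 := by
        have h1 : |e (X 0)| = E := hX0A.2
        nlinarith [sq_abs (e (X 0))]
      -- sign structure of r on each interval
      have hF3 : ∀ j ≤ m, ∀ y, c j ≤ y → y ≤ c (j+1) →
          0 ≤ e (X j) * r y ∧ (e y ≠ 0 → 0 < e (X j) * r y) := by
        intro j hj y h1 h2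
        have hya : a ≤ y := le_trans (hclow j hj) h1
        have hy0 : 0 < y := lt_of_lt_of_le ha hya
        have hkey : (-1:ℝ)^j * ∏ i ∈ Finset.range j, (z i ^2 - y^2)
            = ∏ i ∈ Finset.range j, (y^2 - z i ^2) := by
          rw [show ((-1:ℝ)^j) = ∏ _i ∈ Finset.range j, (-1:ℝ) from by
            rw [Finset.prod_const, Finset.card_range], ← Finset.prod_mul_distrib]
          exact Finset.prod_congr rfl fun i _ => by ring
        have hsplit : ∏ i ∈ Finset.range m, (z i ^2 - y^2)
            = (∏ i ∈ Finset.range j, (z i ^2 - y^2)) *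
              ∏ i ∈ Finset.Ico j m, (z i ^2 - y^2) :=
          (Finset.prod_range_mul_prod_Ico _ hj).symm
        have hrw : e (X j) * r y = E^2 * y *
            ((∏ i ∈ Finset.range j, (y^2 - z i ^2)) *
             ∏ i ∈ Finset.Ico j m, (z i ^2 - y^2)) := by
          calc e (X j) * r y
              = (e (X 0))^2 * y * (((-1:ℝ)^j * ∏ i ∈ Finset.range j, (z i ^2 - y^2)) *
                ∏ i ∈ Finset.Ico j m, (z i ^2 - y^2)) := by
                rw [hγr y, hpow j hj, hsplit]; ring
            _ = _ := by rw [hkey, hE0sq]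
        -- factor bounds
        have hfac1 : ∀ i ∈ Finset.range j, 0 ≤ y^2 - z i ^2 := by
          intro i hi
          rw [Finset.mem_range] at hi
          have hj1 : 1 ≤ j := by omega
          have him : i < m := by omega
          have hz1 : z i ≤ z (j-1) := hzle i (j-1) (by omega) (by omega)
          have hz2 : c j = z (j-1) := hcval1 j hj1 hj
          have hz3 : 0 < z i := lt_trans ha (hzb i him).1
          nlinarith
        have hfac2 : ∀ i ∈ Finset.Ico j m, 0 ≤ z i ^2 - y^2 := by
          intro i hi
          rw [Finset.mem_Ico] at hi
          have hjm' : j < m := by omega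
          have hz1 : z j ≤ z i := hzle j i hi.1 hi.2
          have hz2 : c (j+1) = z j := hcsucc j hjm'
          nlinarith
        constructor
        · rw [hrw]
          apply mul_nonneg (mul_nonneg (by positivity) hy0.le)
          exact mul_nonneg (Finset.prod_nonneg hfac1) (Finset.prod_nonneg hfac2)
        · intro hey
          have hyz : ∀ i < m, y ≠ z i := by
            intro i hi hcontra
            exact hey (hcontra ▸ (hzb i hi).2.2)
          rw [hrw]
          apply mul_pos (mul_pos (by positivity) hy0)
          apply mul_pos
          · apply Finset.prod_pos
            intro i hi
            rw [Finset.mem_range] at hi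
            have him : i < m := by omega
            have h0 := hfac1 i (Finset.mem_range.2 hi)
            rcases eq_or_lt_of_le h0 with heq | hlt
            · exfalso
              apply hyz i him
              have hz3 : 0 < z i := lt_trans ha (hzb i him).1
              nlinarith
            · exact hlt
          · apply Finset.prod_pos
            intro i hi
            have hi' := Finset.mem_Ico.1 hi
            have h0 := hfac2 i hi
            rcases eq_or_lt_of_le h0 with heq | hlt
            · exfalso
              apply hyz i hi'.2
              have hz3 : 0 < z i := lt_trans ha (hzb i hi'.2).1
              nlinarith
            · exact hlt
      -- choose ε
      obtain ⟨ε, hε0, hεB1, hεB2⟩ : ∃ ε > 0, ε * (E * CR) < E^2/2 ∧ ε * (E * CR) < δ := by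
        refine ⟨min (E^2/2) δ / (2*(E*CR)+1), by positivity, ?_, ?_⟩
        · have hM : 0 ≤ E * CR := mul_nonneg hE.le hCR0
          have hK : 0 < min (E^2/2) δ := lt_min (by positivity) hδ0
          have h1 : min (E^2/2) δ / (2*(E*CR)+1) * (E * CR) ≤ min (E^2/2) δ / 2 := by
            rw [div_mul_eq_mul_div, div_le_div_iff₀ (by positivity) (by positivity)]
            nlinarith
          have h2 : min (E^2/2) δ ≤ E^2/2 := min_le_left _ _
          linarith
        · have hM : 0 ≤ E * CR := mul_nonneg hE.le hCR0
          have hK : 0 < min (E^2/2) δ := lt_min (by positivity) hδ0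
          have h1 : min (E^2/2) δ / (2*(E*CR)+1) * (E * CR) ≤ min (E^2/2) δ / 2 := by
            rw [div_mul_eq_mul_div, div_le_div_iff₀ (by positivity) (by positivity)]
            nlinarith
          have h2 : min (E^2/2) δ ≤ δ := min_le_right _ _
          linarith
      -- the final pointwise estimate
      have hfinal : ∀ y ∈ Set.Icc a b, |e y - ε * r y| < E := by
        intro y hy
        obtain ⟨j, hj, h1, h2⟩ := hcover y hy
        have hsjE : |e (X j)| = E := (hmemA j hj).2
        clear_value r c w W X B A E e p m
        have hb1 : |r y| ≤ CR := hCRb y hy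
        have hb2 : |e (X j) * (ε * r y)| ≤ ε * (E * CR) := by
          rw [abs_mul, abs_mul, hsjE, abs_of_pos hε0]
          calc E * (ε * |r y|) = ε * (E * |r y|) := by ring
            _ ≤ ε * (E * CR) :=
              mul_le_mul_of_nonneg_left (mul_le_mul_of_nonneg_left hb1 hE.le) hε0.le
        have hup : e (X j) * (e y - ε * r y) < E^2 := by
          rcases le_or_gt (E^2/2) (e (X j) * e y) with hcase | hcase
          · have hey0 : e y ≠ 0 := by
              intro h0
              rw [h0, mul_zero] at hcase
              nlinarith
            have hpos := (hF3 j hj y h1 h2).2 hey0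
            have hse : e (X j) * e y ≤ E^2 := by
              calc e (X j) * e y ≤ |e (X j) * e y| := le_abs_self _
                _ = E * |e y| := by rw [abs_mul, hsjE]
                _ ≤ E * E := mul_le_mul_of_nonneg_left (hle y hy) hE.le
                _ = E^2 := by ring
            have heq : e (X j) * (e y - ε * r y)
                = e (X j) * e y - ε * (e (X j) * r y) := by ring
            rw [heq]
            have : 0 < ε * (e (X j) * r y) := mul_pos hε0 hpos
            linarith
          · have t2 : -(ε * (E * CR)) ≤ e (X j) * (ε * r y) := by
              have hn1 := neg_abs_le (e (X j) * (ε * r y))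
              linarith
            have t3 : e (X j) * (e y - ε * r y)
                = e (X j) * e y - e (X j) * (ε * r y) := by ring
            rw [t3]
            linarith
        have hlow : -E^2 < e (X j) * (e y - ε * r y) := by
          have hδy := hδ j hj y h1 h2
          have t2 : e (X j) * (ε * r y) ≤ ε * (E * CR) :=
            le_trans (le_abs_self _) hb2
          have t3 : e (X j) * (e y - ε * r y)
              = e (X j) * e y - e (X j) * (ε * r y) := by ring
          rw [t3]
          linarith
        rcases (abs_eq hE.le).1 hsjE with hsj | hsj
        · rw [hsj] at hup hlow
          rw [abs_lt]
          constructor <;> nlinarith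
        · rw [hsj] at hup hlow
          rw [abs_lt]
          constructor <;> nlinarith
      -- contradiction with optimality
      exfalso
      have hb1 := hbest (fun i => α i - ε * γr i)
      obtain ⟨y0, hy0, hy0e⟩ := unifErr_exists hab' hf (oddPoly n (fun i => α i - ε * γr i))
        (oddPoly_cont n _)
      have h2 : |f y0 - oddPoly n (fun i => α i - ε * γr i) y0| < E := by
        rw [oddPoly_sub_smul]
        have h3 := hfinal y0 hy0
        have h4 : f y0 - (oddPoly n α y0 - ε * oddPoly n γr y0)
            = -(e y0 - ε * r y0) := by
          simp only [he, hr, hp]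
          ring
        rw [h4, abs_neg]
        exact h3
      rw [hy0e] at h2
      rw [hEdef] at hb1
      exact absurd hb1 (not_le.2 h2)


/-- Chebyshev alternance characterization: `p ∈ L_n` is a best uniform
odd polynomial approximation of `f` on `[a,b]` iff there are `n+1` points
`x₀ < ⋯ < x_n` in `[a,b]` where `|p(x_j) − f(x_j)|` equals `‖p − f‖_{C[a,b]}` with
alternating signs. -/
theorem best_odd_approx_iff_alternance (n : ℕ) (hn : 1 ≤ n) (a b : ℝ) (ha : 0 < a)
    (hab : a < b) (f : ℝ → ℝ) (hf : ContinuousOn f (Set.Icc a b)) (α : ℕ → ℝ) :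
    (∀ β : ℕ → ℝ, unifErr a b f (oddPoly n α) ≤ unifErr a b f (oddPoly n β)) ↔
    ∃ x : Fin (n + 1) → ℝ, StrictMono x ∧ (∀ j, x j ∈ Set.Icc a b) ∧
      (∀ j, |oddPoly n α (x j) - f (x j)| = unifErr a b f (oddPoly n α)) ∧
      (∀ j : Fin n, oddPoly n α (x j.succ) - f (x j.succ)
        = -(oddPoly n α (x j.castSucc) - f (x j.castSucc))) := by
  constructor
  · exact best_implies_alternance n hn a b ha hab f hf α
  · rintro ⟨x, h1, h2, h3, h4⟩ β
    exact alternance_implies_best n hn a b ha hab f hf α x h1 h2 h3 h4 β
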